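/- Fix positive integers n, m, real n×n matrices A and L with L symmetric, a real n×m matrix B, reals q and r with r > 0, T > 0, and a continuous function x̄ : [0,T] → ℝⁿ. Let Γ : [0,T] → (n×n real matrices), β : [0,T] → ℝⁿ, δ : [0,T] → ℝ be continuously differentiable with Γ(t) symmetric for all t and satisfying on [0,T]: Γ' = (1/r)·Γ B Bᵀ Γ − Γ A − Aᵀ Γ − q·I, β' = ((1/r)·Γ B Bᵀ − Aᵀ) β − q·L x̄, δ' = (1/(2r))·⟪β, B Bᵀ β⟫, with terminal conditions Γ(T) = M·I, β(T) = −M·p, δ(T) = (M/2)‖p‖² for some real M ≥ 0 and p ∈ ℝⁿ. Then for every continuous u : [0,T] → ℝᵐ and every continuously differentiable x : [0,T] → ℝⁿ with x' = A x + B u on [0,T] and x(0) = x⁰, one has: ∫₀ᵀ [ (q/2)‖x(t)‖² + q⟪x̄(t), L x(t)⟫ + (r/2)‖u(t)‖² ] dt + (M/2)‖x(T) − p‖² = ½⟪x⁰, Γ(0) x⁰⟫ + ⟪β(0), x⁰⟫ + δ(0) + (r/2)∫₀ᵀ ‖u(t) + (1/r)·Bᵀ(Γ(t) x(t) + β(t))‖²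 dt. -/

import Mathlib

open scoped RealInnerProductSpace Matrix

attribute [local instance] Matrix.normedAddCommGroup Matrix.normedSpace

section Helpers

variable {a b : ℕ}

private lemma tmul {c : ℕ} (M : Matrix (Fin a) (Fin b) ℝ) (N : Matrix (Fin b) (Fin c) ℝ)
    (v : EuclideanSpace ℝ (Fin c)) :
    Matrix.toEuclideanLin (M * N) v = Matrix.toEuclideanLin M (Matrix.toEuclideanLin N v) := by
  simp [Matrix.toEuclideanLin_apply, Matrix.mulVec_mulVec]

private lemma tone (v : EuclideanSpace ℝ (Fin a)) :
    Matrix.toEuclideanLin (1 : Matrix (Fin a) (Fin a) ℝ) v = v := by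
  simp [Matrix.toEuclideanLin_apply]

private lemma tA (N : Matrix (Fin a) (Fin b) ℝ) (v : EuclideanSpace ℝ (Fin a))
    (w : EuclideanSpace ℝ (Fin b)) :
    ⟪Matrix.toEuclideanLin Nᵀ v, w⟫ = ⟪v, Matrix.toEuclideanLin N w⟫ := by
  have h : Nᵀ = Nᴴ := by ext i j; simp [Matrix.conjTranspose_apply]
  rw [h, Matrix.toEuclideanLin_conjTranspose_eq_adjoint, LinearMap.adjoint_inner_left]

private noncomputable def psiAux (n : ℕ) :
    Matrix (Fin n) (Fin n) ℝ →L[ℝ] (EuclideanSpace ℝ (Fin n) →L[ℝ] EuclideanSpace ℝ (Fin n)) :=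
  LinearMap.toContinuousLinearMap
    { toFun := fun N => LinearMap.toContinuousLinearMap (Matrix.toEuclideanLin N)
      map_add' := by intros; ext v; simp
      map_smul' := by intros; ext v; simp }

private lemma psiAux_apply {n : ℕ} (N : Matrix (Fin n) (Fin n) ℝ) (v : EuclideanSpace ℝ (Fin n)) :
    psiAux n N v = Matrix.toEuclideanLin N v := rfl

set_option maxHeartbeats 1000000 in
private lemma key_algebra (n m : ℕ) (A L : Matrix (Fin n) (Fin n) ℝ) (hL : L.IsSymm) (B : Matrix (Fin n) (Fin m) ℝ)
    (G : Matrix (Fin n) (Fin n) ℝ) (hGs : G.IsSymm) (q r : ℝ) (hr : 0 < r)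
    (X xb bt : EuclideanSpace ℝ (Fin n)) (U : EuclideanSpace ℝ (Fin m)) :
    (1/2) * (⟪X, Matrix.toEuclideanLin ((1/r)•(G*B*Bᵀ*G) - G*A - Aᵀ*G - q•(1 : Matrix (Fin n) (Fin n) ℝ)) X +
        Matrix.toEuclideanLin G (Matrix.toEuclideanLin A X + Matrix.toEuclideanLin B U)⟫ +
      ⟪Matrix.toEuclideanLin A X + Matrix.toEuclideanLin B U, Matrix.toEuclideanLin G X⟫)
    + (⟪bt, Matrix.toEuclideanLin A X + Matrix.toEuclideanLin B U⟫ +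
      ⟪Matrix.toEuclideanLin ((1/r)•(G*B*Bᵀ) - Aᵀ) bt - q • Matrix.toEuclideanLin L xb, X⟫)
    + (1/(2*r)) * ⟪bt, Matrix.toEuclideanLin (B*Bᵀ) bt⟫
    = (r/2) * ‖U + (1/r) • Matrix.toEuclideanLin Bᵀ (Matrix.toEuclideanLin G X + bt)‖^2
      - ((q/2)*‖X‖^2 + q*⟪xb, Matrix.toEuclideanLin L X⟫ + (r/2)*‖U‖^2) := by
  simp only [map_sub, map_smul, map_add, LinearMap.sub_apply, LinearMap.smul_apply,
    LinearMap.add_apply, tmul, tone, smul_add]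
  simp only [← real_inner_self_eq_norm_sq]
  simp only [inner_add_left, inner_add_right, inner_sub_left, inner_sub_right,
    real_inner_smul_left, real_inner_smul_right]
  have sym : ∀ v w : EuclideanSpace ℝ (Fin n),
      ⟪Matrix.toEuclideanLin G v, w⟫ = ⟪v, Matrix.toEuclideanLin G w⟫ := by
    intro v w
    conv_lhs => rw [show G = Gᵀ from hGs.symm]
    rw [tA]
  have hLsym : ∀ v w : EuclideanSpace ℝ (Fin n),
      ⟪Matrix.toEuclideanLin L v, w⟫ = ⟪v, Matrix.toEuclideanLin L w⟫ := by
    intro v w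
    conv_lhs => rw [show L = Lᵀ from hL.symm]
    rw [tA]
  have hAdj := tA A
  have hBAdj := tA B
  have e1 : ⟪X, Matrix.toEuclideanLin G (Matrix.toEuclideanLin B
      (Matrix.toEuclideanLin Bᵀ (Matrix.toEuclideanLin G X)))⟫ =
      ⟪Matrix.toEuclideanLin Bᵀ (Matrix.toEuclideanLin G X),
        Matrix.toEuclideanLin Bᵀ (Matrix.toEuclideanLin G X)⟫ := by
    rw [← sym, ← hBAdj]
  have e2 : ⟪X, Matrix.toEuclideanLin Aᵀ (Matrix.toEuclideanLin G X)⟫ =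
      ⟪X, Matrix.toEuclideanLin G (Matrix.toEuclideanLin A X)⟫ := by
    rw [real_inner_comm, hAdj, sym]
  have e3 : ⟪Matrix.toEuclideanLin A X, Matrix.toEuclideanLin G X⟫ =
      ⟪X, Matrix.toEuclideanLin G (Matrix.toEuclideanLin A X)⟫ := by
    rw [real_inner_comm, sym]
  have e4 : ⟪X, Matrix.toEuclideanLin G (Matrix.toEuclideanLin B U)⟫ =
      ⟪Matrix.toEuclideanLin Bᵀ (Matrix.toEuclideanLin G X), U⟫ := by
    rw [← sym, ← hBAdj]
  have e5 : ⟪Matrix.toEuclideanLin B U, Matrix.toEuclideanLin G X⟫ =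
      ⟪Matrix.toEuclideanLin Bᵀ (Matrix.toEuclideanLin G X), U⟫ := by
    rw [real_inner_comm, ← hBAdj]
  have e6 : ⟪Matrix.toEuclideanLin Aᵀ bt, X⟫ = ⟪bt, Matrix.toEuclideanLin A X⟫ := hAdj bt X
  have e7 : ⟪Matrix.toEuclideanLin G (Matrix.toEuclideanLin B
      (Matrix.toEuclideanLin Bᵀ bt)), X⟫ =
      ⟪Matrix.toEuclideanLin Bᵀ bt,
        Matrix.toEuclideanLin Bᵀ (Matrix.toEuclideanLin G X)⟫ := by
    rw [sym, real_inner_comm, ← hBAdj, real_inner_comm]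
  have e8 : ⟪Matrix.toEuclideanLin L xb, X⟫ = ⟪xb, Matrix.toEuclideanLin L X⟫ := hLsym xb X
  have e9 : ⟪bt, Matrix.toEuclideanLin B U⟫ = ⟪Matrix.toEuclideanLin Bᵀ bt, U⟫ :=
    (hBAdj bt U).symm
  have e10 : ⟪bt, Matrix.toEuclideanLin B (Matrix.toEuclideanLin Bᵀ bt)⟫ =
      ⟪Matrix.toEuclideanLin Bᵀ bt, Matrix.toEuclideanLin Bᵀ bt⟫ := (hBAdj bt _).symm
  have e11 : ⟪U, Matrix.toEuclideanLin Bᵀ (Matrix.toEuclideanLin G X)⟫ =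
      ⟪Matrix.toEuclideanLin Bᵀ (Matrix.toEuclideanLin G X), U⟫ := real_inner_comm _ _
  have e12 : ⟪U, Matrix.toEuclideanLin Bᵀ bt⟫ = ⟪Matrix.toEuclideanLin Bᵀ bt, U⟫ :=
    real_inner_comm _ _
  have e13 : ⟪Matrix.toEuclideanLin Bᵀ (Matrix.toEuclideanLin G X),
      Matrix.toEuclideanLin Bᵀ bt⟫ =
      ⟪Matrix.toEuclideanLin Bᵀ bt,
        Matrix.toEuclideanLin Bᵀ (Matrix.toEuclideanLin G X)⟫ := real_inner_comm _ _
  rw [e1, e2, e3, e4, e5, e6, e7, e8, e9, e10, e11, e12, e13]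
  field_simp
  ring

end Helpers

/-- Integrated completion-of-squares identity: for the LQ tracking problem toward a single
destination `p` with terminal weight `M`, the cost of any admissible control equals the
quadratic value `½⟪x⁰, Γ(0)x⁰⟫ + ⟪β(0), x⁰⟫ + δ(0)` plus the nonnegative excess
`(r/2)∫₀ᵀ ‖u + (1/r)Bᵀ(Γx + β)‖² dt`. -/
theorem integrated_completion_of_squares (n m : ℕ) (hn : 0 < n) (hm : 0 < m)
    (A L : Matrix (Fin n) (Fin n) ℝ) (hL : L.IsSymm)
    (B : Matrix (Fin n) (Fin m) ℝ) (q r : ℝ) (hr : 0 < r)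
    (T : ℝ) (hT : 0 < T)
    (xbar : ℝ → EuclideanSpace ℝ (Fin n)) (hxbar : Continuous xbar)
    (Γ : ℝ → Matrix (Fin n) (Fin n) ℝ) (β : ℝ → EuclideanSpace ℝ (Fin n)) (δ : ℝ → ℝ)
    (hΓs : ∀ t : ℝ, (Γ t).IsSymm)
    (hΓ : ∀ t ∈ Set.Icc (0 : ℝ) T, HasDerivAt Γ
      ((1 / r) • (Γ t * B * Bᵀ * Γ t) - Γ t * A - Aᵀ * Γ t -
        q • (1 : Matrix (Fin n) (Fin n) ℝ)) t)
    (hβ : ∀ t ∈ Set.Icc (0 : ℝ) T, HasDerivAt β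
      (Matrix.toEuclideanLin ((1 / r) • (Γ t * B * Bᵀ) - Aᵀ) (β t) -
        q • Matrix.toEuclideanLin L (xbar t)) t)
    (hδ : ∀ t ∈ Set.Icc (0 : ℝ) T, HasDerivAt δ
      ((1 / (2 * r)) * ⟪β t, Matrix.toEuclideanLin (B * Bᵀ) (β t)⟫) t)
    (M : ℝ) (hM : 0 ≤ M) (p : EuclideanSpace ℝ (Fin n))
    (hΓT : Γ T = M • (1 : Matrix (Fin n) (Fin n) ℝ))
    (hβT : β T = (-M) • p)
    (hδT : δ T = (M / 2) * ‖p‖ ^ 2)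
    (u : ℝ → EuclideanSpace ℝ (Fin m)) (hu : Continuous u)
    (x : ℝ → EuclideanSpace ℝ (Fin n)) (x0 : EuclideanSpace ℝ (Fin n))
    (hx : ∀ t ∈ Set.Icc (0 : ℝ) T, HasDerivAt x
      (Matrix.toEuclideanLin A (x t) + Matrix.toEuclideanLin B (u t)) t)
    (hx0 : x 0 = x0) :
    (∫ t in (0 : ℝ)..T, ((q / 2) * ‖x t‖ ^ 2 +
        q * ⟪xbar t, Matrix.toEuclideanLin L (x t)⟫ + (r / 2) * ‖u t‖ ^ 2)) +
      (M / 2) * ‖x T - p‖ ^ 2 =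
    (1 / 2) * ⟪x0, Matrix.toEuclideanLin (Γ 0) x0⟫ + ⟪β 0, x0⟫ + δ 0 +
      (r / 2) * ∫ t in (0 : ℝ)..T,
        ‖u t + (1 / r) •
          Matrix.toEuclideanLin Bᵀ (Matrix.toEuclideanLin (Γ t) (x t) + β t)‖ ^ 2 := by
  have hsub : Set.uIcc (0 : ℝ) T = Set.Icc 0 T := Set.uIcc_of_le hT.le
  set g : ℝ → ℝ := fun t =>
    (1 / 2) * ⟪x t, Matrix.toEuclideanLin (Γ t) (x t)⟫ + ⟪β t, x t⟫ + δ t with hg_def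
  set run : ℝ → ℝ := fun t => (q / 2) * ‖x t‖ ^ 2 +
    q * ⟪xbar t, Matrix.toEuclideanLin L (x t)⟫ + (r / 2) * ‖u t‖ ^ 2 with hrun_def
  set exc : ℝ → ℝ := fun t =>
    ‖u t + (1 / r) • Matrix.toEuclideanLin Bᵀ
      (Matrix.toEuclideanLin (Γ t) (x t) + β t)‖ ^ 2 with hexc_def
  -- pointwise derivative of g
  have hg : ∀ t ∈ Set.Icc (0 : ℝ) T, HasDerivAt g ((r / 2) * exc t - run t) t := by
    intro t ht
    have hx' := hx t ht
    have hβ' := hβ t ht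
    have hδ' := hδ t ht
    have hΓ' := hΓ t ht
    have hC : HasDerivAt (fun s => psiAux n (Γ s))
        (psiAux n ((1 / r) • (Γ t * B * Bᵀ * Γ t) - Γ t * A - Aᵀ * Γ t -
          q • (1 : Matrix (Fin n) (Fin n) ℝ))) t :=
      (psiAux n).hasFDerivAt.comp_hasDerivAt t hΓ'
    have hCx : HasDerivAt (fun s => psiAux n (Γ s) (x s))
        (psiAux n ((1 / r) • (Γ t * B * Bᵀ * Γ t) - Γ t * A - Aᵀ * Γ t -
            q • (1 : Matrix (Fin n) (Fin n) ℝ)) (x t) +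
          psiAux n (Γ t) (Matrix.toEuclideanLin A (x t) + Matrix.toEuclideanLin B (u t))) t :=
      hC.clm_apply hx'
    have hf1 := (hx'.inner ℝ hCx).const_mul (1 / 2)
    have hf2 := hβ'.inner ℝ hx'
    have hcomb := (hf1.add hf2).add hδ'
    simp only [psiAux_apply] at hcomb
    have hkey : (1 / 2) * (⟪x t, Matrix.toEuclideanLin
          ((1 / r) • (Γ t * B * Bᵀ * Γ t) - Γ t * A - Aᵀ * Γ t -
            q • (1 : Matrix (Fin n) (Fin n) ℝ)) (x t) +
          Matrix.toEuclideanLin (Γ t)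
            (Matrix.toEuclideanLin A (x t) + Matrix.toEuclideanLin B (u t))⟫ +
        ⟪Matrix.toEuclideanLin A (x t) + Matrix.toEuclideanLin B (u t),
          Matrix.toEuclideanLin (Γ t) (x t)⟫) +
        (⟪β t, Matrix.toEuclideanLin A (x t) + Matrix.toEuclideanLin B (u t)⟫ +
          ⟪Matrix.toEuclideanLin ((1 / r) • (Γ t * B * Bᵀ) - Aᵀ) (β t) -
            q • Matrix.toEuclideanLin L (xbar t), x t⟫) +
        (1 / (2 * r)) * ⟪β t, Matrix.toEuclideanLin (B * Bᵀ) (β t)⟫ =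
        (r / 2) * exc t - run t := by
      simp only [hexc_def, hrun_def]
      exact key_algebra n m A L hL B (Γ t) (hΓs t) q r hr (x t) (xbar t) (β t) (u t)
    exact hkey ▸ hcomb
  -- continuity facts
  have hxc : ContinuousOn x (Set.Icc 0 T) :=
    fun t ht => (hx t ht).continuousAt.continuousWithinAt
  have hβc : ContinuousOn β (Set.Icc 0 T) :=
    fun t ht => (hβ t ht).continuousAt.continuousWithinAt
  have hΓc : ContinuousOn Γ (Set.Icc 0 T) :=
    fun t ht => (hΓ t ht).continuousAt.continuousWithinAt
  have hPx : ContinuousOn (fun t => Matrix.toEuclideanLin (Γ t) (x t)) (Set.Icc 0 T) := by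
    have : ContinuousOn (fun t => psiAux n (Γ t)) (Set.Icc 0 T) :=
      (psiAux n).continuous.comp_continuousOn hΓc
    exact this.clm_apply hxc
  have hTL : Continuous (Matrix.toEuclideanLin L :
      EuclideanSpace ℝ (Fin n) → EuclideanSpace ℝ (Fin n)) :=
    LinearMap.continuous_of_finiteDimensional _
  have hTBt : Continuous (Matrix.toEuclideanLin Bᵀ :
      EuclideanSpace ℝ (Fin n) → EuclideanSpace ℝ (Fin m)) :=
    LinearMap.continuous_of_finiteDimensional _
  have hrunc : ContinuousOn run (Set.Icc 0 T) := by
    apply ContinuousOn.add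
    apply ContinuousOn.add
    · exact (continuousOn_const.mul ((hxc.norm).pow 2))
    · exact continuousOn_const.mul
        (hxbar.continuousOn.inner (hTL.comp_continuousOn hxc))
    · exact continuousOn_const.mul ((hu.continuousOn.norm).pow 2)
  have hexcc : ContinuousOn exc (Set.Icc 0 T) := by
    apply ContinuousOn.pow
    apply ContinuousOn.norm
    exact hu.continuousOn.add
      ((show ContinuousOn (fun t => Matrix.toEuclideanLin Bᵀ
        (Matrix.toEuclideanLin (Γ t) (x t) + β t)) (Set.Icc 0 T) from
        hTBt.comp_continuousOn (hPx.add hβc)).const_smul (1 / r))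
  have hdc : ContinuousOn (fun t => (r / 2) * exc t - run t) (Set.Icc 0 T) :=
    (continuousOn_const.mul hexcc).sub hrunc
  -- FTC
  have hFTC : ∫ t in (0 : ℝ)..T, ((r / 2) * exc t - run t) = g T - g 0 :=
    intervalIntegral.integral_eq_sub_of_hasDerivAt
      (fun t ht => hg t (hsub ▸ ht)) ((hsub ▸ hdc).intervalIntegrable)
  have hexci : IntervalIntegrable exc MeasureTheory.volume 0 T :=
    (hsub ▸ hexcc).intervalIntegrable
  have hruni : IntervalIntegrable run MeasureTheory.volume 0 T :=
    (hsub ▸ hrunc).intervalIntegrable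
  have hsplit : ∫ t in (0 : ℝ)..T, ((r / 2) * exc t - run t) =
      (r / 2) * (∫ t in (0 : ℝ)..T, exc t) - ∫ t in (0 : ℝ)..T, run t := by
    rw [intervalIntegral.integral_sub (hexci.const_mul _) hruni,
      intervalIntegral.integral_const_mul]
  -- terminal and initial values of g
  have hgT : g T = (M / 2) * ‖x T - p‖ ^ 2 := by
    simp only [hg_def, hΓT, hβT, hδT, map_smul, LinearMap.smul_apply, tone]
    rw [norm_sub_sq_real, real_inner_smul_left, real_inner_smul_right,
      real_inner_self_eq_norm_sq, real_inner_comm p (x T)]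
    ring
  have hg0 : g 0 = (1 / 2) * ⟪x0, Matrix.toEuclideanLin (Γ 0) x0⟫ + ⟪β 0, x0⟫ + δ 0 := by
    simp [hg_def, hx0]
  have : (r / 2) * (∫ t in (0 : ℝ)..T, exc t) - ∫ t in (0 : ℝ)..T, run t = g T - g 0 := by
    rw [← hsplit, hFTC]
  rw [hgT, hg0] at this
  linarith
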